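/- The sum G := Σ_{ε ∈ {±1}} Σ_{j=1}^{g} Σ_{ℓ ∈ ℤ} 2/(γ₁ − (ε γ_j + 2πℓ))², where the two terms with (ε, j, ℓ) = (1, 1, 0) and (−1, 1, 0) are omitted, converges and equals 1/6 − 1/(2γ₁²) + (1/2)·(sin γ₁)^{−2} + (1/2) Σ_{ε ∈ {±1}} Σ_{j=2}^{g} (sin((γ₁ + ε γ_j)/2))^{−2}. -/

import Mathlib

open Real MeasureTheory Complex Filter AddCircle

lemma summable_base {d : ℝ} (hd : 1 ≤ d) :
    Summable (fun n : ℕ => 1 / (d + 2 * π * n) ^ 2) := by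
  have h1 : Summable (fun n : ℕ => 1 / ((n : ℝ) + 1) ^ 2) := by
    have h2 : Summable (fun n : ℕ => 1 / (n : ℝ) ^ 2) :=
      Real.summable_one_div_nat_pow.mpr one_lt_two
    have := (summable_nat_add_iff 1).mpr h2
    simpa using this
  refine Summable.of_nonneg_of_le (fun n => by positivity) (fun n => ?_) h1
  have hπ := Real.pi_gt_three
  have hcn : (0:ℝ) ≤ n := Nat.cast_nonneg n
  have hn : ((n : ℝ) + 1) ≤ d + 2 * π * n := by nlinarith
  have h0 : (0:ℝ) < (n : ℝ) + 1 := by positivity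
  have h2 : ((n:ℝ) + 1)^2 ≤ (d + 2 * π * n)^2 := by nlinarith
  exact one_div_le_one_div_of_le (by positivity) h2

lemma summable_shifted (c : ℝ) : Summable (fun ℓ : ℤ => 1 / (c - 2 * π * ℓ) ^ 2) := by
  have hπ := Real.pi_gt_three
  obtain ⟨k, hk⟩ : ∃ k : ℕ, |c| + 1 ≤ k := exists_nat_ge (|c| + 1)
  have habs1 : -|c| ≤ c := neg_abs_le c
  have habs2 : c ≤ |c| := le_abs_self c
  have hknn : (0:ℝ) ≤ (k:ℝ) := Nat.cast_nonneg k
  have h6 : (6:ℝ) * k ≤ 2 * π * k := by nlinarith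
  apply Summable.of_nat_of_neg
  · have hd : (1:ℝ) ≤ 2 * π * k - c := by nlinarith
    have hb : Summable (fun n : ℕ => 1 / ((2 * π * k - c) + 2 * π * n) ^ 2) :=
      summable_base hd
    refine (summable_nat_add_iff k).mp (hb.congr ?_)
    intro n
    have he : (c - 2 * π * ((n : ℝ) + (k : ℝ))) = -((2 * π * k - c) + 2 * π * n) := by ring
    push_cast
    rw [he, neg_sq]
  · have hd : (1:ℝ) ≤ 2 * π * k + c := by nlinarith
    have hb : Summable (fun n : ℕ => 1 / ((2 * π * k + c) + 2 * π * n) ^ 2) :=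
      summable_base hd
    refine (summable_nat_add_iff k).mp (hb.congr ?_)
    intro n
    have he : (c - 2 * π * (-((n : ℝ) + (k : ℝ)))) = (2 * π * k + c) + 2 * π * n := by ring
    push_cast
    rw [he]


lemma hasSum_csc_sq (c : ℝ) (hc : Real.sin (c / 2) ≠ 0) :
    HasSum (fun ℓ : ℤ => 1 / (c - 2 * π * ℓ) ^ 2) (1 / (4 * Real.sin (c / 2) ^ 2)) := by
  have hπ : (0:ℝ) < π := Real.pi_pos
  haveI : Fact (0 < 2 * π) := ⟨by positivity⟩
  set F : ℝ → ℂ := fun t => Complex.exp (((c / (2 * π) * t : ℝ) : ℂ) * Complex.I) with hF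
  set G : AddCircle (2 * π) → ℂ := AddCircle.liftIoc (2 * π) 0 F with hG
  have hGnorm : ∀ x, ‖G x‖ = 1 := by
    intro x
    rw [hG, AddCircle.liftIoc]
    simp only [Function.comp_apply, Set.restrict_apply, hF]
    exact Complex.norm_exp_ofReal_mul_I _
  have hGmeas : Measurable G := by
    have h1 : Measurable (AddCircle.equivIoc (2 * π) 0) :=
      (AddCircle.measurableEquivIoc (2 * π) 0).measurable
    have h2 : Continuous F := by
      apply Complex.continuous_exp.comp
      exact (Complex.continuous_ofReal.comp (by continuity)).mul continuous_const
    exact ((h2.measurable).comp measurable_subtype_coe).comp h1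
  have hmem : MemLp G 2 haarAddCircle := by
    refine MemLp.mono_exponent ?_ (le_top : (2:ENNReal) ≤ ⊤)
    exact memLp_top_of_bound hGmeas.aestronglyMeasurable 1
      (Filter.Eventually.of_forall fun x => (hGnorm x).le)
  set f2 := hmem.toLp G with hf2
  have hcoe : (f2 : AddCircle (2 * π) → ℂ) =ᵐ[haarAddCircle] G := hmem.coeFn_toLp
  have hcoeff_eq : ∀ n : ℤ, fourierCoeff (f2 : AddCircle (2 * π) → ℂ) n = fourierCoeff G n := by
    intro n
    unfold fourierCoeff
    exact integral_congr_ae (hcoe.mono fun x hx => by dsimp only; rw [hx])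
  have hne : ∀ n : ℤ, c - 2 * π * n ≠ 0 := by
    intro n h
    apply hc
    have : c / 2 = n * π := by field_simp; linarith [h]
    rw [this]
    exact Real.sin_int_mul_pi n
  have hcoeff : ∀ n : ℤ, fourierCoeff G n
      = (1 / (2 * π) : ℝ) • ((Complex.exp ((c:ℂ) * Complex.I) - 1) /
        (((c / (2 * π) - n : ℝ) : ℂ) * Complex.I)) := by
    intro n
    rw [fourierCoeff_eq_intervalIntegral G n 0]
    set β : ℂ := ((c / (2 * π) - n : ℝ) : ℂ) * Complex.I with hβ
    have hβne : β ≠ 0 := by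
      rw [hβ]
      apply mul_ne_zero _ Complex.I_ne_zero
      rw [Complex.ofReal_ne_zero]
      intro h
      have : c = 2 * π * n := by field_simp at h; linarith
      exact hne n (by rw [this]; ring)
    have key : ∀ x : ℝ, (fourier (-n) (x : AddCircle (2*π)) : ℂ) • F x = Complex.exp (β * x) := by
      intro x
      rw [fourier_coe_apply, smul_eq_mul, hF, ← Complex.exp_add]
      congr 1
      rw [hβ]
      have h2πc : ((2 * π : ℝ) : ℂ) ≠ 0 := by
        exact_mod_cast (by positivity : (2*π:ℝ) ≠ 0)
      push_cast
      push_cast at h2πc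
      field_simp
      ring
    trans ((1 / (2 * π) : ℝ) • ∫ x in (0:ℝ)..(0 + 2*π), Complex.exp (β * x))
    · congr 1
      refine intervalIntegral.integral_congr_ae (MeasureTheory.ae_of_all _ fun x hx => ?_)
      rw [Set.uIoc_of_le (by positivity : (0:ℝ) ≤ 0 + 2*π)] at hx
      rw [hG, AddCircle.liftIoc_coe_apply hx]
      exact key x
    · rw [integral_exp_mul_complex hβne]
      have hexp : Complex.exp (β * (((0:ℝ) + 2*π : ℝ) : ℂ)) = Complex.exp ((c:ℂ) * Complex.I) := by
        have h1 : β * (((0:ℝ) + 2*π : ℝ):ℂ) = (c:ℂ) * Complex.I + (-n : ℤ) * (2 * (π:ℂ) * Complex.I) := by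
          rw [hβ]
          have hπc : ((π : ℝ) : ℂ) ≠ 0 := by exact_mod_cast Real.pi_ne_zero
          push_cast
          field_simp
          ring
        rw [h1, Complex.exp_add, Complex.exp_int_mul_two_pi_mul_I, mul_one]
      rw [show ((0:ℝ):ℂ) = 0 by norm_num, mul_zero, Complex.exp_zero, hexp]
  have parseval := tsum_sq_fourierCoeff f2
  have hR : (∫ t : AddCircle (2*π), ‖(f2 : AddCircle (2*π) → ℂ) t‖^2 ∂haarAddCircle) = 1 := by
    rw [integral_congr_ae ((hcoe.mono fun x hx => by dsimp only; rw [hx]) :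
      (fun t => ‖(f2 : AddCircle (2*π) → ℂ) t‖^2) =ᵐ[haarAddCircle] (fun t => ‖G t‖^2))]
    simp [hGnorm]
  have hs0 : Real.sin (c/2)^2 ≠ 0 := pow_ne_zero 2 hc
  have hs2 : (0:ℝ) < 4 * Real.sin (c/2)^2 :=
    by positivity
  have hnorm : ∀ n : ℤ, ‖fourierCoeff ((f2 : AddCircle (2*π) → ℂ)) n‖^2
      = (4 * Real.sin (c/2)^2) * (1/(c - 2*π*n)^2) := by
    intro n
    rw [hcoeff_eq n, hcoeff n]
    have h1 : Complex.exp ((c:ℂ)*Complex.I) - 1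
        = ((Real.cos c - 1 : ℝ):ℂ) + ((Real.sin c : ℝ):ℂ)*Complex.I := by
      rw [Complex.exp_mul_I]
      push_cast
      ring
    have h2 : ‖Complex.exp ((c:ℂ)*Complex.I) - 1‖^2 = (Real.cos c - 1)^2 + (Real.sin c)^2 := by
      rw [h1, Complex.sq_norm, Complex.normSq_add_mul_I]
    have h3 : ‖(((c / (2 * π) - n : ℝ)):ℂ) * Complex.I‖ = |c / (2 * π) - n| := by
      rw [norm_mul, Complex.norm_I, mul_one,
        Complex.norm_real, Real.norm_eq_abs]
    have hd : c / (2 * π) - (n:ℝ) ≠ 0 := by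
      intro h
      apply hne n
      field_simp at h
      linarith
    have htrig : (Real.cos c - 1)^2 + (Real.sin c)^2 = 4 * Real.sin (c/2)^2 := by
      have i1 : Real.sin (c/2)^2 = 1/2 - Real.cos c / 2 := by
        have h := Real.sin_sq_eq_half_sub (c/2)
        rwa [show 2*(c/2) = c by ring] at h
      have i2 : Real.sin c ^ 2 = 1 - Real.cos c ^ 2 := Real.sin_sq c
      nlinarith [i1, i2]
    rw [norm_smul, norm_div (Complex.exp ((c:ℂ)*Complex.I) - 1), h3]
    have h4 : ‖(1 / (2*π) : ℝ)‖ = 1/(2*π) := by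
      rw [Real.norm_eq_abs, abs_of_pos (by positivity)]
    rw [h4, mul_pow, div_pow (‖Complex.exp ((c:ℂ)*Complex.I) - 1‖), h2, htrig, _root_.sq_abs]
    field_simp
  have hsummable := summable_shifted c
  have hts : (4 * Real.sin (c/2)^2) * (∑' ℓ : ℤ, 1/(c - 2*π*ℓ)^2) = 1 := by
    rw [← tsum_mul_left, ← tsum_congr hnorm, parseval, hR]
  have hval : (∑' ℓ : ℤ, 1/(c - 2*π*ℓ)^2) = 1 / (4 * Real.sin (c/2)^2) := by
    field_simp at hts ⊢
    linarith
  exact hval ▸ hsummable.hasSum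

lemma hasSum_two_div (c : ℝ) (hc : Real.sin (c / 2) ≠ 0) :
    HasSum (fun ℓ : ℤ => 2 / (c - 2 * π * ℓ) ^ 2) ((1/2) * (Real.sin (c / 2) ^ 2)⁻¹) := by
  have h := (hasSum_csc_sq c hc).mul_left 2
  have h1 : (fun ℓ : ℤ => 2 * (1 / (c - 2 * π * ℓ) ^ 2))
      = fun ℓ : ℤ => 2 / (c - 2 * π * ℓ) ^ 2 := by
    funext ℓ; rw [mul_one_div]
  have h2 : 2 * (1 / (4 * Real.sin (c / 2) ^ 2)) = (1/2) * (Real.sin (c / 2) ^ 2)⁻¹ := by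
    rw [one_div, mul_inv]; ring
  rw [h1, h2] at h
  exact h

lemma hasSum_int_zeta : HasSum (fun ℓ : ℤ => 1 / ((ℓ:ℝ)) ^ 2) (π ^ 2 / 3) := by
  have hp : HasSum (fun n : ℕ => 1 / (n:ℝ) ^ 2) (π ^ 2 / 6) := hasSum_zeta_two
  have hp' : HasSum (fun n : ℕ => (fun ℓ : ℤ => 1 / ((ℓ:ℝ)) ^ 2) (n : ℤ)) (π ^ 2 / 6) :=
    hp.congr_fun fun n => by show (1:ℝ) / (((n:ℕ):ℤ):ℝ)^2 = 1/(n:ℝ)^2; norm_num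
  have hm : HasSum (fun n : ℕ => (fun ℓ : ℤ => 1 / ((ℓ:ℝ)) ^ 2) (-((n : ℤ) + 1))) (π ^ 2 / 6) := by
    have h1 := (hasSum_nat_add_iff' (f := fun n : ℕ => 1 / (n:ℝ) ^ 2) 1).mpr hp
    simp only [Finset.range_one, Finset.sum_singleton, Nat.cast_zero] at h1
    norm_num at h1
    exact h1.congr_fun fun n => by
      show (1:ℝ) / ((-((n:ℤ)+1) : ℤ):ℝ)^2 = _
      push_cast
      rw [neg_sq, one_div]
  have h := HasSum.of_nat_of_neg_add_one (f := fun ℓ : ℤ => 1 / ((ℓ:ℝ)) ^ 2) hp' hm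
  have hv : π ^ 2 / 6 + π ^ 2 / 6 = π ^ 2 / 3 := by ring
  rwa [hv] at h

theorem zero_repulsion_sum (g : ℕ) (hg : 1 ≤ g) (γ : ℕ → ℝ)
    (hpos : 0 < γ 1)
    (hmono : ∀ j : ℕ, 1 ≤ j → j < g → γ j < γ (j + 1))
    (hlt : γ g < π) :
    HasSum
      (fun ℓ : ℤ => ∑ ε ∈ ({1, -1} : Finset ℝ), ∑ j ∈ Finset.Icc 1 g,
        if j = 1 ∧ ℓ = 0 then 0 else 2 / (γ 1 - (ε * γ j + 2 * π * (ℓ : ℝ))) ^ 2)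
      (1 / 6 - 1 / (2 * γ 1 ^ 2) + (1 / 2) * (Real.sin (γ 1) ^ 2)⁻¹ +
        (1 / 2) * ∑ ε ∈ ({1, -1} : Finset ℝ), ∑ j ∈ Finset.Icc 2 g,
          (Real.sin ((γ 1 + ε * γ j) / 2) ^ 2)⁻¹) := by
  have hπ : (0:ℝ) < π := Real.pi_pos
  have hchain : ∀ b : ℕ, b ≤ g → ∀ a : ℕ, 1 ≤ a → a ≤ b → γ a ≤ γ b := by
    intro b
    induction b with
    | zero => intro _ a ha hab; exact absurd hab (by omega)
    | succ m ih =>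
      intro hbg a ha hab
      by_cases h : a = m + 1
      · rw [h]
      · have ham : a ≤ m := by omega
        have h1 : γ a ≤ γ m := ih (by omega) a ha ham
        have h2 : γ m < γ (m + 1) := hmono m (by omega) (by omega)
        linarith
  have hγ1g : γ 1 ≤ γ g := hchain g le_rfl 1 le_rfl hg
  have hγ1π : γ 1 < π := lt_of_le_of_lt hγ1g hlt
  have sin1 : Real.sin (γ 1) ≠ 0 := ne_of_gt (Real.sin_pos_of_pos_of_lt_pi hpos hγ1π)
  have hjfacts : ∀ j : ℕ, 2 ≤ j → j ≤ g → γ 1 < γ j ∧ γ j < π := by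
    intro j h2 hjg
    constructor
    · have h12 : γ 1 < γ 2 := hmono 1 le_rfl (by omega)
      have h2j : γ 2 ≤ γ j := hchain j hjg 2 (by omega) h2
      linarith
    · exact lt_of_le_of_lt (hchain g le_rfl j (by omega) hjg) hlt
  set v : ℝ → ℕ → ℝ := fun ε j =>
    if j = 1 then (if ε = 1 then 1/6 else (1/2) * (Real.sin (γ 1) ^ 2)⁻¹ - 1/(2 * γ 1 ^ 2))
    else (1/2) * (Real.sin ((γ 1 - ε * γ j)/2) ^ 2)⁻¹ with hv
  have main : HasSum
      (fun ℓ : ℤ => ∑ ε ∈ ({1, -1} : Finset ℝ), ∑ j ∈ Finset.Icc 1 g,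
        if j = 1 ∧ ℓ = 0 then 0 else 2 / (γ 1 - (ε * γ j + 2 * π * (ℓ : ℝ))) ^ 2)
      (∑ ε ∈ ({1, -1} : Finset ℝ), ∑ j ∈ Finset.Icc 1 g, v ε j) := by
    refine hasSum_sum fun ε hε => hasSum_sum fun j hj => ?_
    simp only [Finset.mem_insert, Finset.mem_singleton] at hε
    rw [Finset.mem_Icc] at hj
    by_cases hj1 : j = 1
    · subst hj1
      rcases hε with rfl | rfl
      · -- ε = 1, j = 1
        have hz := hasSum_int_zeta.mul_left (1/(2*π^2))
        have hfun : (fun ℓ : ℤ => (1/(2*π^2)) * (1/((ℓ:ℝ))^2))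
            = fun ℓ : ℤ => if 1 = 1 ∧ ℓ = 0 then 0
              else 2/(γ 1 - (1*γ 1 + 2*π*(ℓ:ℝ)))^2 := by
          funext ℓ
          by_cases h0 : ℓ = 0
          · subst h0; simp
          · rw [if_neg (by simp [h0])]
            have he : γ 1 - (1*γ 1 + 2*π*(ℓ:ℝ)) = -(2*π*ℓ) := by ring
            rw [he, neg_sq]
            have hℓ : ((ℓ:ℝ)) ≠ 0 := Int.cast_ne_zero.mpr h0
            field_simp
        have hval6 : (1/(2*π^2)) * (π^2/3) = 1/6 := by
          field_simp
          ring
        rw [hfun, hval6] at hz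
        have hv11 : v 1 1 = 1/6 := by simp [hv]
        rw [hv11]
        exact hz
      · -- ε = -1, j = 1
        have hc : Real.sin ((2*γ 1)/2) ≠ 0 := by
          rw [show (2*γ 1)/2 = γ 1 by ring]; exact sin1
        have hfull := hasSum_two_div (2*γ 1) hc
        have hsub := hfull.sub (hasSum_ite_eq (0:ℤ) (2/(2*γ 1)^2))
        have hfun : (fun ℓ : ℤ => 2/(2*γ 1 - 2*π*(ℓ:ℝ))^2 - (if ℓ = 0 then 2/(2*γ 1)^2 else 0))
            = fun ℓ : ℤ => if 1 = 1 ∧ ℓ = 0 then 0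
              else 2/(γ 1 - (-1*γ 1 + 2*π*(ℓ:ℝ)))^2 := by
          funext ℓ
          by_cases h0 : ℓ = 0
          · subst h0; simp
          · rw [if_neg h0, if_neg (by simp [h0]), sub_zero]
            congr 2
            ring
        rw [hfun] at hsub
        have hval : (1/2) * (Real.sin (2*γ 1 / 2)^2)⁻¹ - 2/(2*γ 1)^2
            = v (-1) 1 := by
          have hval2 : 2/(2*γ 1)^2 = 1/(2 * γ 1 ^ 2) := by
            rw [div_eq_div_iff (by positivity) (by positivity)]; ring
          rw [show (2*γ 1)/2 = γ 1 by ring, hval2]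
          norm_num [hv]
        rw [hval] at hsub
        exact hsub
    · -- j ≥ 2
      have h2j : 2 ≤ j := by omega
      obtain ⟨hj1γ, hjπ⟩ := hjfacts j h2j hj.2
      have hcne : Real.sin ((γ 1 - ε * γ j)/2) ≠ 0 := by
        rcases hε with rfl | rfl
        · rw [one_mul, show (γ 1 - γ j)/2 = -((γ j - γ 1)/2) by ring, Real.sin_neg,
            neg_ne_zero]
          exact ne_of_gt (Real.sin_pos_of_pos_of_lt_pi (by linarith) (by linarith))
        · rw [show γ 1 - -1 * γ j = γ 1 + γ j by ring]
          exact ne_of_gt (Real.sin_pos_of_pos_of_lt_pi (by linarith) (by linarith))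
      have h := hasSum_two_div (γ 1 - ε * γ j) hcne
      have hfun : (fun ℓ : ℤ => 2/((γ 1 - ε * γ j) - 2*π*(ℓ:ℝ))^2)
          = fun ℓ : ℤ => if j = 1 ∧ ℓ = 0 then 0
            else 2/(γ 1 - (ε * γ j + 2*π*(ℓ:ℝ)))^2 := by
        funext ℓ
        rw [if_neg (by simp [hj1])]
        congr 2
        ring
      rw [hfun] at h
      have hvj : v ε j = (1/2) * (Real.sin ((γ 1 - ε * γ j)/2) ^ 2)⁻¹ := by
        simp [hv, hj1]
      rw [hvj]
      exact h
  have hIcc : Finset.Icc 1 g = insert 1 (Finset.Icc 2 g) := by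
    ext x; simp only [Finset.mem_Icc, Finset.mem_insert]; omega
  have h1not : (1:ℕ) ∉ Finset.Icc 2 g := by simp
  have hne11 : (1:ℝ) ≠ -1 := by norm_num
  have hs1 : ∑ j ∈ Finset.Icc 2 g, v 1 j
      = (1/2) * ∑ j ∈ Finset.Icc 2 g, (Real.sin ((γ 1 + (-1) * γ j)/2)^2)⁻¹ := by
    rw [Finset.mul_sum]
    refine Finset.sum_congr rfl fun j hj => ?_
    rw [Finset.mem_Icc] at hj
    have hvj : v 1 j = (1/2) * (Real.sin ((γ 1 - 1 * γ j)/2) ^ 2)⁻¹ := by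
      simp only [hv]; rw [if_neg (by omega)]
    rw [hvj, show (γ 1 - 1 * γ j)/2 = (γ 1 + (-1) * γ j)/2 by ring]
  have hs2 : ∑ j ∈ Finset.Icc 2 g, v (-1) j
      = (1/2) * ∑ j ∈ Finset.Icc 2 g, (Real.sin ((γ 1 + 1 * γ j)/2)^2)⁻¹ := by
    rw [Finset.mul_sum]
    refine Finset.sum_congr rfl fun j hj => ?_
    rw [Finset.mem_Icc] at hj
    have hvj : v (-1) j = (1/2) * (Real.sin ((γ 1 - (-1) * γ j)/2) ^ 2)⁻¹ := by
      simp only [hv]; rw [if_neg (by omega)]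
    rw [hvj, show (γ 1 - (-1) * γ j)/2 = (γ 1 + 1 * γ j)/2 by ring]
  have hVal : (∑ ε ∈ ({1, -1} : Finset ℝ), ∑ j ∈ Finset.Icc 1 g, v ε j)
      = 1 / 6 - 1 / (2 * γ 1 ^ 2) + (1 / 2) * (Real.sin (γ 1) ^ 2)⁻¹ +
        (1 / 2) * ∑ ε ∈ ({1, -1} : Finset ℝ), ∑ j ∈ Finset.Icc 2 g,
          (Real.sin ((γ 1 + ε * γ j) / 2) ^ 2)⁻¹ := by
    rw [Finset.sum_pair hne11, Finset.sum_pair hne11, hIcc,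
      Finset.sum_insert h1not, Finset.sum_insert h1not, hs1, hs2]
    have hv11 : v 1 1 = 1/6 := by simp [hv]
    have hv21 : v (-1) 1 = (1/2) * (Real.sin (γ 1) ^ 2)⁻¹ - 1/(2 * γ 1 ^ 2) := by
      norm_num [hv]
    rw [hv11, hv21]
    ring
  rw [hVal] at main
  exact main
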